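/- arXiv:1612.07934 — 2 statements merged into one kernel-verified Lean document; each statement's English description precedes it below -/
import Mathlib

section
/- Decomposition of the gradient norm in the differential frame: there exists C > 0 such that for every continuously differentiable f : closure(B₁) → ℝ, ∫_{B₁} |∇f(x)|² dx ≤ C ( ∫_{B_{1/2}} |∇f(x)|² dx + Σ_{i=1}^{3} ∫_{B₁} |(x × e_i)·∇f(x)|² dx + ∫_{B₁} |x·∇f(x)|² dx ), where B_{1/2} is the open ball of radius 1/2 centered at the origin. -/
/- Decomposition of the gradient norm in the spherical differential frame:
`∫_{B₁} |∇f|² ≤ C (∫_{B_{1/2}} |∇f|² + Σᵢ ∫_{B₁} |(x × eᵢ)·∇f|² + ∫_{B₁} |x·∇f|²)`. -/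

open MeasureTheory Metric Finset

noncomputable section

/-- ℝ³ with the Euclidean norm. -/
abbrev E3 : Type := EuclideanSpace ℝ (Fin 3)

/-- The standard basis vectors of ℝ³. -/
def e3 (i : Fin 3) : E3 := EuclideanSpace.single i 1

/-- The cross product on ℝ³. -/
def cross3 (x y : E3) : E3 :=
  WithLp.toLp 2 ![x 1 * y 2 - x 2 * y 1, x 2 * y 0 - x 0 * y 2, x 0 * y 1 - x 1 * y 0]

lemma inner_grad (f : E3 → ℝ) (x y : E3) :
    (inner ℝ (gradient f x) y : ℝ) = fderiv ℝ f x y := by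
  rw [gradient, InnerProductSpace.toDual_symm_apply]

lemma lagrange (g x : E3) :
    (∑ i : Fin 3, (inner ℝ g (cross3 x (e3 i)) : ℝ) ^ 2) + (inner ℝ g x : ℝ) ^ 2
      = ‖x‖ ^ 2 * ‖g‖ ^ 2 := by
  rw [← real_inner_self_eq_norm_sq x, ← real_inner_self_eq_norm_sq g]
  simp only [Fin.sum_univ_three, PiLp.inner_apply, RCLike.inner_apply, conj_trivial,
    cross3, e3, EuclideanSpace.single_apply]
  norm_num [Matrix.cons_val_zero, Matrix.cons_val_one, Matrix.head_cons, Fin.sum_univ_three,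
    Fin.ext_iff, Matrix.cons_val_two, Matrix.tail_cons]
  ring

lemma key_identity (f : E3 → ℝ) (x : E3) :
    (∑ i : Fin 3, (fderiv ℝ f x (cross3 x (e3 i))) ^ 2) + (fderiv ℝ f x x) ^ 2
      = ‖x‖ ^ 2 * ‖gradient f x‖ ^ 2 := by
  rw [← lagrange (gradient f x) x]
  simp only [inner_grad]

lemma norm_grad (f : E3 → ℝ) (x : E3) : ‖gradient f x‖ = ‖fderiv ℝ f x‖ := by
  rw [gradient]
  exact (InnerProductSpace.toDual ℝ E3).symm.norm_map _

theorem gradient_decomposition_differential_frame :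
    ∃ C > (0 : ℝ), ∀ f : E3 → ℝ,
      ContDiffOn ℝ 1 f (closedBall (0 : E3) 1) →
      (∫ x in ball (0 : E3) 1, ‖gradient f x‖ ^ 2) ≤
        C * ((∫ x in ball (0 : E3) (1 / 2), ‖gradient f x‖ ^ 2)
          + (∑ i : Fin 3, ∫ x in ball (0 : E3) 1, (fderiv ℝ f x (cross3 x (e3 i))) ^ 2)
          + ∫ x in ball (0 : E3) 1, (fderiv ℝ f x x) ^ 2) := by
  refine ⟨4, by norm_num, fun f hf => ?_⟩
  set B := ball (0 : E3) 1 with hB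
  set Bh := ball (0 : E3) (1/2) with hBh
  have hBhB : Bh ⊆ B := ball_subset_ball (by norm_num)
  have hmB : MeasurableSet B := measurableSet_ball
  have hmBh : MeasurableSet Bh := measurableSet_ball
  set F : E3 → ℝ := fun x => ‖gradient f x‖ ^ 2 with hF
  set G : Fin 3 → E3 → ℝ := fun i x => (fderiv ℝ f x (cross3 x (e3 i))) ^ 2 with hG
  set H : E3 → ℝ := fun x => (fderiv ℝ f x x) ^ 2 with hH
  -- fderiv agrees with fderivWithin on the ball
  have huniq : UniqueDiffOn ℝ (closedBall (0 : E3) 1) :=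
    uniqueDiffOn_convex (convex_closedBall _ _)
      (by rw [interior_closedBall _ one_ne_zero]; exact ⟨0, mem_ball_self one_pos⟩)
  have hdc : ContinuousOn (fderivWithin ℝ f (closedBall (0 : E3) 1)) (closedBall (0 : E3) 1) :=
    hf.continuousOn_fderivWithin huniq le_rfl
  have heq : ∀ x ∈ B, fderivWithin ℝ f (closedBall (0 : E3) 1) x = fderiv ℝ f x := by
    intro x hx
    exact fderivWithin_of_mem_nhds
      (Filter.mem_of_superset (isOpen_ball.mem_nhds hx) ball_subset_closedBall)
  have hcf : ContinuousOn (fun x => fderiv ℝ f x) B :=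
    (hdc.mono ball_subset_closedBall).congr fun x hx => (heq x hx).symm
  -- bound on the derivative
  obtain ⟨M, hM⟩ := (isCompact_closedBall (0 : E3) 1).exists_bound_of_continuousOn hdc
  have hMb : ∀ x ∈ B, ‖fderiv ℝ f x‖ ≤ M := by
    intro x hx
    rw [← heq x hx]; exact hM x (ball_subset_closedBall hx)
  -- continuity of the integrands on B
  have hcF : ContinuousOn F B := by
    have : ContinuousOn (fun x => ‖fderiv ℝ f x‖ ^ 2) B := (hcf.norm.pow 2)
    exact this.congr fun x hx => by simp [hF, norm_grad]
  have hccross : ∀ i : Fin 3, Continuous (fun x : E3 => cross3 x (e3 i)) := by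
    intro i
    have : Continuous fun x : E3 => (cross3 x (e3 i) : Fin 3 → ℝ) := by
      refine continuous_pi fun j => ?_
      fin_cases j <;> fin_cases i <;>
        · simp (config := { decide := true }) [cross3, e3, EuclideanSpace.single_apply]
          fun_prop
    exact (PiLp.continuous_toLp 2 _).comp this
  have hcG : ∀ i, ContinuousOn (G i) B := fun i =>
    (hcf.clm_apply (hccross i).continuousOn).pow 2
  have hcH : ContinuousOn H B := (hcf.clm_apply continuousOn_id).pow 2
  -- pointwise bounds
  have hF0 : ∀ y, 0 ≤ F y := fun y => by rw [hF]; exact sq_nonneg _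
  have hG0 : ∀ i y, 0 ≤ G i y := fun i y => by rw [hG]; exact sq_nonneg _
  have hH0 : ∀ y, 0 ≤ H y := fun y => by rw [hH]; exact sq_nonneg _
  have hshrink : ∀ x ∈ B, ‖x‖ ^ 2 * F x ≤ F x := by
    intro x hx
    have hx1 : ‖x‖ ≤ 1 := le_of_lt (by simpa using mem_ball_iff_norm.mp hx)
    have h2 : ‖x‖ ^ 2 ≤ 1 := by nlinarith [norm_nonneg x]
    calc ‖x‖ ^ 2 * F x ≤ 1 * F x := mul_le_mul_of_nonneg_right h2 (hF0 x)
      _ = F x := one_mul _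
  have hFb : ∀ x ∈ B, F x ≤ M ^ 2 := by
    intro x hx
    rw [hF]
    simp only [norm_grad]
    have h0 : (0:ℝ) ≤ ‖fderiv ℝ f x‖ := norm_nonneg _
    exact pow_le_pow_left₀ h0 (hMb x hx) 2
  have hkey : ∀ x : E3, (∑ i : Fin 3, G i x) + H x = ‖x‖ ^ 2 * F x := fun x => key_identity f x
  have hGb : ∀ i, ∀ x ∈ B, G i x ≤ M ^ 2 := by
    intro i x hx
    have h1 : G i x ≤ (∑ j : Fin 3, G j x) + H x := by
      have h2 : G i x ≤ ∑ j : Fin 3, G j x :=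
        Finset.single_le_sum (f := fun j => G j x) (fun j _ => hG0 j x) (Finset.mem_univ i)
      linarith [hH0 x]
    rw [hkey x] at h1
    linarith [hshrink x hx, hFb x hx]
  have hHb : ∀ x ∈ B, H x ≤ M ^ 2 := by
    intro x hx
    have h1 : H x ≤ (∑ j : Fin 3, G j x) + H x := by
      have h2 : (0:ℝ) ≤ ∑ j : Fin 3, G j x :=
        Finset.sum_nonneg fun j _ => hG0 j x
      linarith
    rw [hkey x] at h1
    linarith [hshrink x hx, hFb x hx]
  -- integrability
  have hBfin : volume B ≠ ⊤ := measure_ball_lt_top.ne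
  have hint_of : ∀ (g : E3 → ℝ), ContinuousOn g B → (∀ x ∈ B, g x ≤ M ^ 2) →
      (∀ x, 0 ≤ g x) → IntegrableOn g B := by
    intro g hc hb h0
    refine ⟨hc.aestronglyMeasurable hmB, ?_⟩
    refine HasFiniteIntegral.restrict_of_bounded (C := M ^ 2) hBfin.lt_top ?_
    filter_upwards [ae_restrict_mem hmB] with x hx
    rw [Real.norm_eq_abs, abs_of_nonneg (h0 x)]
    exact hb x hx
  have hintF : IntegrableOn F B := hint_of F hcF hFb fun x => sq_nonneg _
  have hintG : ∀ i, IntegrableOn (G i) B :=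
    fun i => hint_of (G i) (hcG i) (hGb i) fun x => sq_nonneg _
  have hintH : IntegrableOn H B := hint_of H hcH hHb fun x => sq_nonneg _
  have hintFh : IntegrableOn F Bh := hintF.mono_set hBhB
  have hindint : Integrable (Bh.indicator F) (volume.restrict B) := by
    have h1 : Integrable (Bh.indicator F) volume := (integrable_indicator_iff hmBh).mpr hintFh
    exact h1.integrableOn
  -- pointwise inequality on B
  have hptwise : ∀ x ∈ B, F x ≤ Bh.indicator F x + 4 * ((∑ i : Fin 3, G i x) + H x) := by
    intro x hx
    rw [hkey x]
    by_cases hxh : x ∈ Bh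
    · rw [Set.indicator_of_mem hxh]
      nlinarith [hF0 x, sq_nonneg ‖x‖]
    · rw [Set.indicator_of_notMem hxh]
      have hxn : (1:ℝ)/2 ≤ ‖x‖ := by
        by_contra h
        push_neg at h
        exact hxh (mem_ball_iff_norm.mpr (by simpa using h))
      have h2 : (1:ℝ)/4 ≤ ‖x‖ ^ 2 := by nlinarith [norm_nonneg x]
      have h3 : (1:ℝ)/4 * F x ≤ ‖x‖ ^ 2 * F x := mul_le_mul_of_nonneg_right h2 (hF0 x)
      linarith
  -- integrate
  have hmono : (∫ x in B, F x) ≤ ∫ x in B, (Bh.indicator F x + 4 * ((∑ i : Fin 3, G i x) + H x)) := by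
    refine integral_mono_of_nonneg ?_ ?_ ?_
    · filter_upwards with x using hF0 x
    · exact hindint.add (((integrable_finset_sum _ fun i _ => hintG i).add hintH).const_mul 4)
    · filter_upwards [ae_restrict_mem hmB] with x hx using hptwise x hx
  have hsplit : (∫ x in B, (Bh.indicator F x + 4 * ((∑ i : Fin 3, G i x) + H x)))
      = (∫ x in B, Bh.indicator F x) + 4 * ((∑ i : Fin 3, ∫ x in B, G i x) + ∫ x in B, H x) := by
    have hGH : Integrable (fun x => (∑ i : Fin 3, G i x) + H x) (volume.restrict B) :=
      (integrable_finset_sum _ fun i _ => hintG i).add hintH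
    have e1 : (∫ x in B, (Bh.indicator F x + 4 * ((∑ i : Fin 3, G i x) + H x)))
        = (∫ x in B, Bh.indicator F x) + ∫ x in B, 4 * ((∑ i : Fin 3, G i x) + H x) :=
      integral_add hindint (hGH.const_mul 4)
    have e2 : (∫ x in B, 4 * ((∑ i : Fin 3, G i x) + H x))
        = 4 * ∫ x in B, ((∑ i : Fin 3, G i x) + H x) := integral_const_mul 4 _
    have e3' : (∫ x in B, ((∑ i : Fin 3, G i x) + H x))
        = (∫ x in B, ∑ i : Fin 3, G i x) + ∫ x in B, H x :=
      integral_add (integrable_finset_sum _ fun i _ => hintG i) hintH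
    have e4 : (∫ x in B, ∑ i : Fin 3, G i x) = ∑ i : Fin 3, ∫ x in B, G i x :=
      integral_finset_sum _ fun i _ => hintG i
    rw [e1, e2, e3', e4]
  have hind : (∫ x in B, Bh.indicator F x) = ∫ x in Bh, F x := by
    rw [setIntegral_indicator hmBh, Set.inter_eq_self_of_subset_right hBhB]
  have hFh0 : 0 ≤ ∫ x in Bh, F x := integral_nonneg fun x => hF0 x
  calc (∫ x in B, F x)
      ≤ (∫ x in Bh, F x) + 4 * ((∑ i : Fin 3, ∫ x in B, G i x) + ∫ x in B, H x) := by
        rw [← hind]; linarith [hmono, hsplit.le, hsplit.ge]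
    _ ≤ 4 * ((∫ x in Bh, F x) + (∑ i : Fin 3, ∫ x in B, G i x) + ∫ x in B, H x) := by ring_nf; linarith
  
end
end

section
/- Normal component of the divergence of the viscous stress tensor: let μ, λ ∈ ℝ and let v : U → ℝ³ be twice continuously differentiable on an open set U ⊂ ℝ³. Then for every x ∈ U, x · (div S(v))(x) = (2μ + λ) (x·∇)(div v)(x) + μ Σ_{s=1}^{3} (x × e_s)·∇((curl v)_s)(x), where (curl v)_s = Σ_{m,n} ε_{smn} ∂_m v^n is the s-th component of the curl of v. -/
/- Normal component of the divergence of the viscous stress tensor: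
`x · (div S(v)) = (2μ + λ)(x·∇)(div v) + μ Σₛ (x × eₛ)·∇((curl v)ₛ)`. -/

open MeasureTheory Metric Finset Matrix

noncomputable section

/-- The spatial partial derivative `∂ᵢ f` of a scalar function on ℝ³. -/
def pd (i : Fin 3) (f : E3 → ℝ) (x : E3) : ℝ := fderiv ℝ f x (e3 i)

/-- The viscous stress tensor `S(v) = μ(Dv + Dvᵀ) + λ (div v) I₃`. -/
def stress (μ lam : ℝ) (v : E3 → E3) (x : E3) (i j : Fin 3) : ℝ :=
  μ * (pd i (fun y => v y j) x + pd j (fun y => v y i) x) +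
    lam * (if i = j then ∑ k, pd k (fun y => v y k) x else 0)

/-- The divergence of a vector field on ℝ³. -/
def div3 (v : E3 → E3) (x : E3) : ℝ := ∑ k, pd k (fun y => v y k) x

/-- The curl of a vector field on ℝ³, whose `s`-th component is
`(curl v)ₛ = Σ_{m,n} ε_{smn} ∂_m vⁿ`. -/
def curl3 (v : E3 → E3) (x : E3) : Fin 3 → ℝ :=
  ![pd 1 (fun y => v y 2) x - pd 2 (fun y => v y 1) x,
    pd 2 (fun y => v y 0) x - pd 0 (fun y => v y 2) x,
    pd 0 (fun y => v y 1) x - pd 1 (fun y => v y 0) x]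

/-- Coefficients of the stress tensor entries as linear combinations of `∂ₐ v^b`. -/
def cS (μ lam : ℝ) (i j a b : Fin 3) : ℝ :=
  μ * ((if a = i ∧ b = j then 1 else 0) + (if a = j ∧ b = i then 1 else 0)) +
    (if i = j ∧ a = b then lam else 0)

/-- Levi-Civita symbol on `Fin 3`. -/
def eps (s a b : Fin 3) : ℝ :=
  if (s, a, b) = (0, 1, 2) ∨ (s, a, b) = (1, 2, 0) ∨ (s, a, b) = (2, 0, 1) then 1
  else if (s, a, b) = (0, 2, 1) ∨ (s, a, b) = (1, 0, 2) ∨ (s, a, b) = (2, 1, 0) then -1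
  else 0

lemma e3_apply (i j : Fin 3) : e3 i j = if i = j then 1 else 0 := by
  simp [e3, EuclideanSpace.single_apply, eq_comm]

lemma decomp (w : E3) : w = ∑ i, w i • e3 i := by
  ext j
  simp [Fin.sum_univ_three, e3_apply]
  fin_cases j <;> simp

lemma clm_apply (L : E3 →L[ℝ] ℝ) (w : E3) : L w = ∑ i, w i * L (e3 i) := by
  conv_lhs => rw [decomp w]
  rw [map_sum]
  simp [smul_eq_mul]

set_option maxHeartbeats 2000000 in
theorem normal_component_div_stress
    (μ lam : ℝ) (U : Set E3) (hU : IsOpen U)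
    (v : E3 → E3) (hv : ContDiffOn ℝ 2 v U) :
    ∀ x ∈ U,
      ∑ j, x j * (∑ i, pd i (fun y => stress μ lam v y i j) x)
        = (2 * μ + lam) * fderiv ℝ (fun y => div3 v y) x x
          + μ * ∑ s, fderiv ℝ (fun y => curl3 v y s) x (cross3 x (e3 s)) := by
  intro x hx
  have hvx : ContDiffAt ℝ 2 v x := hv.contDiffAt (hU.mem_nhds hx)
  have hvk : ∀ k : Fin 3, ContDiffAt ℝ 2 (fun y => v y k) x := fun k =>
    (EuclideanSpace.proj k : E3 →L[ℝ] ℝ).contDiff.contDiffAt.comp x hvx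
  -- second derivative facts
  have hD2 : ∀ k : Fin 3, DifferentiableAt ℝ (fderiv ℝ (fun y => v y k)) x := fun k =>
    ((hvk k).fderiv_right (m := 1) le_rfl).differentiableAt one_ne_zero
  have hpdD : ∀ (a b : Fin 3),
      HasFDerivAt (fun y => pd a (fun z => v z b) y)
        ((ContinuousLinearMap.apply ℝ ℝ (e3 a)).comp
          (fderiv ℝ (fderiv ℝ (fun y => v y b)) x)) x := fun a b =>
    ((ContinuousLinearMap.apply ℝ ℝ (e3 a)).hasFDerivAt).comp x (hD2 b).hasFDerivAt
  have hdiff : ∀ (a b : Fin 3), DifferentiableAt ℝ (fun y => pd a (fun z => v z b) y) x :=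
    fun a b => (hpdD a b).differentiableAt
  have hsym : ∀ k : Fin 3, IsSymmSndFDerivAt ℝ (fun y => v y k) x := fun k =>
    (hvk k).isSymmSndFDerivAt (by simp [minSmoothness_of_isRCLikeNormedField])
  set T : Fin 3 → Fin 3 → Fin 3 → ℝ :=
    fun m a b => fderiv ℝ (fun y => pd a (fun z => v z b) y) x (e3 m) with hT
  have hTval : ∀ m a b : Fin 3,
      T m a b = fderiv ℝ (fderiv ℝ (fun y => v y b)) x (e3 m) (e3 a) := by
    intro m a b
    rw [hT]
    simp only [(hpdD a b).fderiv]
    rfl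
  have hTsym : ∀ m a b : Fin 3, T m a b = T a m b := by
    intro m a b
    rw [hTval, hTval, hsym b (e3 m) (e3 a)]
  have master : ∀ (c : Fin 3 → Fin 3 → ℝ) (w : E3),
      fderiv ℝ (fun y => ∑ a, ∑ b, c a b * pd a (fun z => v z b) y) x w
        = ∑ a, ∑ b, c a b * fderiv ℝ (fun y => pd a (fun z => v z b) y) x w := by
    intro c w
    have h1 : ∀ a b : Fin 3, DifferentiableAt ℝ (fun y => c a b * pd a (fun z => v z b) y) x :=
      fun a b => (hdiff a b).const_mul _
    rw [fderiv_fun_sum (fun a _ => DifferentiableAt.fun_sum (fun b _ => h1 a b))]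
    simp only [ContinuousLinearMap.coe_sum', Finset.sum_apply]
    refine Finset.sum_congr rfl fun a _ => ?_
    rw [fderiv_fun_sum (fun b _ => h1 a b)]
    simp only [ContinuousLinearMap.coe_sum', Finset.sum_apply]
    refine Finset.sum_congr rfl fun b _ => ?_
    rw [fderiv_const_mul (hdiff a b)]
    simp
  -- express stress components
  have hstress : ∀ i j : Fin 3, (fun y => stress μ lam v y i j)
      = (fun y => ∑ a, ∑ b, cS μ lam i j a b * pd a (fun z => v z b) y) := by
    intro i j
    funext y
    fin_cases i <;> fin_cases j <;>
      simp [stress, cS, Fin.sum_univ_three] <;> ring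
  have hdivf : (fun y => div3 v y)
      = (fun y => ∑ a, ∑ b, (if a = b then (1:ℝ) else 0) * pd a (fun z => v z b) y) := by
    funext y
    simp [div3, Fin.sum_univ_three]
  have hcurlf : ∀ s : Fin 3, (fun y => curl3 v y s)
      = (fun y => ∑ a, ∑ b, eps s a b * pd a (fun z => v z b) y) := by
    intro s
    funext y
    fin_cases s <;> simp [curl3, eps, Fin.sum_univ_three] <;> ring
  have hL : ∀ i j : Fin 3, pd i (fun y => stress μ lam v y i j) x
      = ∑ a, ∑ b, cS μ lam i j a b * T i a b := by
    intro i j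
    show fderiv ℝ (fun y => stress μ lam v y i j) x (e3 i) = _
    rw [hstress i j, master]
  have hDiv : fderiv ℝ (fun y => div3 v y) x x
      = ∑ m, x m * ∑ a, ∑ b, (if a = b then (1:ℝ) else 0) * T m a b := by
    rw [hdivf, clm_apply]
    exact Finset.sum_congr rfl fun m _ => by rw [master]
  have hCurl : ∀ s : Fin 3, fderiv ℝ (fun y => curl3 v y s) x (cross3 x (e3 s))
      = ∑ m, (cross3 x (e3 s)) m * ∑ a, ∑ b, eps s a b * T m a b := by
    intro s
    rw [hcurlf s, clm_apply]
    exact Finset.sum_congr rfl fun m _ => by rw [master]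
  rw [hDiv]
  simp only [hL, hCurl]
  simp only [Fin.sum_univ_three]
  simp only [cS, eps, cross3, e3_apply, Matrix.cons_val_zero, Matrix.cons_val_one,
    Matrix.head_cons, Matrix.cons_val_two, Matrix.tail_cons, Fin.reduceEq, Prod.mk.injEq,
    and_self, and_true, true_and, and_false, false_and, or_self, false_or, or_false,
    if_true, if_false, reduceIte, mul_zero, zero_mul, mul_one, one_mul, add_zero, zero_add,
    sub_zero, zero_sub, mul_neg, neg_mul]
  simp only [show T 1 0 0 = T 0 1 0 from hTsym 1 0 0,
    show T 2 0 0 = T 0 2 0 from hTsym 2 0 0,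
    show T 2 1 0 = T 1 2 0 from hTsym 2 1 0,
    show T 1 0 1 = T 0 1 1 from hTsym 1 0 1,
    show T 2 0 1 = T 0 2 1 from hTsym 2 0 1,
    show T 2 1 1 = T 1 2 1 from hTsym 2 1 1,
    show T 1 0 2 = T 0 1 2 from hTsym 1 0 2,
    show T 2 0 2 = T 0 2 2 from hTsym 2 0 2,
    show T 2 1 2 = T 1 2 2 from hTsym 2 1 2]
  ring

end
end
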